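/- arXiv:1707.05936 — 3 statements merged into one kernel-verified Lean document; each statement's English description precedes it below -/
import Mathlib

section
/- Let p(x)^{2c} = ∑_{i=1}^n x_i^{2β_i} on 𝒟 = {x ∈ ℝⁿ : p(x) < 1}, and define S(x)_j = x_j/(1 - p(x)^{2c})^{α_j} with α_j β_j = c for all j. Setting κ̃(x) = (1 - p(x)^{2c})^{-1} and y = S(x), one has p(y)^{2c} = κ̃(x)^{2c}(1 - κ̃(x)^{-1}), and consequently κ̃(x)^{2c} - κ̃(x)^{2c-1} - p(y)^{2c} = 0. -/
theorem quasiParabolic_S_root (n : ℕ) (α β : Fin n → ℕ) (c : ℕ)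
    (hα : ∀ i, 0 < α i) (hβ : ∀ i, 0 < β i) (hc : 0 < c)
    (hαβ : ∀ i, α i * β i = c)
    (x : Fin n → ℝ) (hx : ∑ i, x i ^ (2 * β i) < 1)
    (y : Fin n → ℝ) (hy : ∀ j, y j = x j / (1 - ∑ i, x i ^ (2 * β i)) ^ α j) :
    (∑ i, y i ^ (2 * β i)) =
        ((1 - ∑ i, x i ^ (2 * β i))⁻¹) ^ (2 * c) *
          (1 - ((1 - ∑ i, x i ^ (2 * β i))⁻¹)⁻¹) ∧
      ((1 - ∑ i, x i ^ (2 * β i))⁻¹) ^ (2 * c) -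
          ((1 - ∑ i, x i ^ (2 * β i))⁻¹) ^ (2 * c - 1) -
          (∑ i, y i ^ (2 * β i)) = 0 := by
  set S : ℝ := ∑ i, x i ^ (2 * β i) with hSdef
  have ht : 0 < 1 - S := by linarith
  have htne : (1 - S) ≠ 0 := ne_of_gt ht
  have hsum : (∑ i, y i ^ (2 * β i)) = S / (1 - S) ^ (2 * c) := by
    rw [hSdef, Finset.sum_div]
    apply Finset.sum_congr rfl
    intro i _
    rw [hy i, div_pow, ← pow_mul]
    congr 2
    rw [mul_comm (α i), mul_assoc, mul_comm (β i), hαβ i]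
  have h2c : 2 * c = (2 * c - 1) + 1 := by omega
  constructor
  · rw [hsum, inv_inv]
    field_simp
    rw [← mul_pow, mul_one_div_cancel htne, one_pow]
    ring
  · rw [hsum, h2c, Nat.add_sub_cancel, pow_succ, inv_pow]
    field_simp
    ring
end

section
/- Let g be the desingularized vector field g_i(x) = f̃_i(x) − α_i x_i ∑_{j=1}^n (β_j/c) x_j^{2β_j−1} f̃_j(x) associated with a quasi-homogeneous vector field f of type α and order k+1, where f̃_j denotes the extension of κ^{-(k+α_j)}f_j(κ^{α₁}x₁,…,κ^{αₙ}xₙ). If f is quasi-homogeneous of type α and order k+1, then g satisfies g_i(ι_α(x)) = (−1)^{k+α_i} g_i(x), where ι_α(x) = ((−1)^{α₁}x₁,…,(−1)^{αₙ}xₙ). -/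
theorem desingularized_equivariance (n : ℕ) (α β : Fin n → ℕ) (c k : ℕ)
    (hα : ∀ i, 0 < α i) (hβ : ∀ i, 0 < β i) (hc : 0 < c) (hk : 1 ≤ k)
    (hαβ : ∀ j, α j * β j = c)
    (f : (Fin n → ℝ) → Fin n → ℝ)
    (hqh : ∀ (r : ℝ) (x : Fin n → ℝ) (j : Fin n),
      f (fun i => r ^ α i * x i) j = r ^ (k + α j) * f x j)
    (g : (Fin n → ℝ) → Fin n → ℝ)
    (hg : ∀ (x : Fin n → ℝ) (i : Fin n),
      g x i = f x i - (α i : ℝ) * x i *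
        ∑ j, ((β j : ℝ) / c) * x j ^ (2 * β j - 1) * f x j) :
    ∀ (x : Fin n → ℝ) (i : Fin n),
      g (fun j => (-1 : ℝ) ^ α j * x j) i = (-1 : ℝ) ^ (k + α i) * g x i := by
  intro x i
  rw [hg, hg]
  have hf : ∀ j, f (fun i => (-1 : ℝ) ^ α i * x i) j = (-1 : ℝ) ^ (k + α j) * f x j :=
    fun j => hqh (-1) x j
  have hsum : ∑ j, ((β j : ℝ) / c) * ((-1 : ℝ) ^ α j * x j) ^ (2 * β j - 1) *
        f (fun i => (-1 : ℝ) ^ α i * x i) j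
      = (-1 : ℝ) ^ k * ∑ j, ((β j : ℝ) / c) * x j ^ (2 * β j - 1) * f x j := by
    rw [Finset.mul_sum]
    apply Finset.sum_congr rfl
    intro j _
    rw [hf, mul_pow, ← pow_mul]
    have h1 : α j * (2 * β j - 1) + (k + α j) = k + 2 * c := by
      have h2 : α j * (2 * β j - 1) + α j = 2 * c := by
        have e1 : α j * (2 * β j - 1) + α j = α j * (2 * β j - 1 + 1) := by ring
        have e2 : 2 * β j - 1 + 1 = 2 * β j := by have := hβ j; omega
        rw [e1, e2, show α j * (2 * β j) = 2 * (α j * β j) by ring, hαβ j]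
      omega
    have hsign : (-1 : ℝ) ^ (α j * (2 * β j - 1)) * (-1 : ℝ) ^ (k + α j) = (-1 : ℝ) ^ k := by
      rw [← pow_add, h1, pow_add, pow_mul]
      norm_num
    linear_combination ((β j : ℝ) / c * x j ^ (2 * β j - 1) * f x j) * hsign
  rw [hsum, hf i]
  simp only [pow_add]
  ring
end

section
/- Under the hypotheses of the Lyapunov proposition (N compact and star-shaped about x_*, Y real symmetric, A(x) = Df(x)ᵀY + YDf(x) negative definite on N, f(x_*) = 0), x_* is the unique equilibrium of f in N. -/
open Matrix

theorem lyapunov_unique_equilibrium (n : ℕ) (Y : Matrix (Fin n) (Fin n) ℝ)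
    (hY : Y.IsSymm)
    (f : (Fin n → ℝ) → Fin n → ℝ) (hf : ContDiff ℝ 1 fun y => f y)
    (N : Set (Fin n → ℝ)) (hN : IsCompact N)
    (xstar : Fin n → ℝ) (hstar : StarConvex ℝ xstar N)
    (hxstarN : xstar ∈ N) (heq : f xstar = 0)
    (Df : (Fin n → ℝ) → Matrix (Fin n) (Fin n) ℝ)
    (hDf : ∀ x, Df x = Matrix.of fun i j =>
      fderiv ℝ (fun z : Fin n → ℝ => f z i) x (Pi.single j 1))
    (hneg : ∀ x ∈ N, (-((Df x)ᵀ * Y + Y * Df x)).PosDef) :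
    ∀ xbar ∈ N, f xbar = 0 → xbar = xstar := by
  intro xbar hxbarN hfbar
  by_contra hne
  set v : Fin n → ℝ := xbar - xstar with hv
  have hv0 : v ≠ 0 := sub_ne_zero.mpr hne
  set p : ℝ → (Fin n → ℝ) := fun s => xstar + s • v with hp
  have hp0 : p 0 = xstar := by simp [hp]
  have hp1 : p 1 = xbar := by simp [hp, hv]
  have hpN : ∀ s ∈ Set.Icc (0:ℝ) 1, p s ∈ N := by
    intro s hs
    have h1 : (1 - s) • xstar + s • xbar ∈ N :=
      hstar hxbarN (by linarith [hs.2]) hs.1 (by ring)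
    have h2 : p s = (1 - s) • xstar + s • xbar := by
      simp only [hp, hv]
      module
    rwa [h2]
  have hfd : Differentiable ℝ f := hf.differentiable one_ne_zero
  have hfdc : ∀ i, Differentiable ℝ (fun z => f z i) := by
    intro i
    exact fun x => (((ContinuousLinearMap.proj i : ((Fin n → ℝ)) →L[ℝ] ℝ).hasFDerivAt).comp x
      (hfd x).hasFDerivAt).differentiableAt
  have hcurve : ∀ s : ℝ, HasDerivAt p v s := by
    intro s
    simpa [hp] using (((hasDerivAt_id s).smul_const v).const_add xstar)
  have happly : ∀ (i : Fin n) (x : Fin n → ℝ),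
      fderiv ℝ (fun z => f z i) x v = ∑ j, v j * Df x i j := by
    intro i x
    have hvdecomp : v = ∑ j, v j • (Pi.single j 1 : Fin n → ℝ) := by
      funext k
      simp [Finset.sum_apply, Pi.single_apply]
    calc fderiv ℝ (fun z => f z i) x v
        = fderiv ℝ (fun z => f z i) x (∑ j, v j • (Pi.single j 1 : Fin n → ℝ)) := by rw [← hvdecomp]
      _ = ∑ j, v j * Df x i j := by
          rw [map_sum]
          refine Finset.sum_congr rfl fun j _ => ?_
          rw [_root_.map_smul, hDf]
          simp [smul_eq_mul]
  have hderiv : ∀ (i : Fin n) (s : ℝ), HasDerivAt (fun t => f (p t) i)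
      (∑ j, v j * Df (p s) i j) s := by
    intro i s
    have := ((hfdc i (p s)).hasFDerivAt).comp_hasDerivAt s (hcurve s)
    rw [happly i (p s)] at this
    exact this
  set h : ℝ → ℝ := fun s => v ⬝ᵥ (Y *ᵥ f (p s)) with hh
  have hh' : ∀ s : ℝ, HasDerivAt h (v ⬝ᵥ ((Y * Df (p s)) *ᵥ v)) s := by
    intro s
    have key : HasDerivAt (fun t => ∑ i, v i * ∑ j, Y i j * f (p t) j)
        (∑ i, v i * ∑ j, Y i j * (∑ k, v k * Df (p s) j k)) s := by
      refine HasDerivAt.fun_sum fun i _ => HasDerivAt.const_mul _ ?_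
      exact HasDerivAt.fun_sum fun j _ => HasDerivAt.const_mul _ (hderiv j s)
    have e1 : (fun t => ∑ i, v i * ∑ j, Y i j * f (p t) j) = h := by
      funext t
      simp [hh, dotProduct, mulVec]
    have e2 : (∑ i, v i * ∑ j, Y i j * (∑ k, v k * Df (p s) j k))
        = v ⬝ᵥ ((Y * Df (p s)) *ᵥ v) := by
      rw [← Matrix.mulVec_mulVec]
      simp only [dotProduct, mulVec]
      refine Finset.sum_congr rfl fun i _ => ?_
      congr 1
      refine Finset.sum_congr rfl fun j _ => ?_
      congr 1
      exact Finset.sum_congr rfl fun k _ => mul_comm _ _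
    rw [e1, e2] at key
    exact key
  have h0 : h 0 = 0 := by simp [hh, hp0, heq]
  have h1 : h 1 = 0 := by simp [hh, hp1, hfbar]
  obtain ⟨c, hc, hc0⟩ := exists_hasDerivAt_eq_slope h
      (fun s => v ⬝ᵥ ((Y * Df (p s)) *ᵥ v)) (show (0:ℝ) < 1 by norm_num)
      (fun s _ => (hh' s).continuousAt.continuousWithinAt)
      (fun s _ => hh' s)
  rw [h0, h1] at hc0
  norm_num at hc0
  have hcN : p c ∈ N := hpN c ⟨hc.1.le, hc.2.le⟩
  have hpos := (hneg (p c) hcN).dotProduct_mulVec_pos hv0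
  have hsym : v ⬝ᵥ (((Df (p c))ᵀ * Y) *ᵥ v) = v ⬝ᵥ ((Y * Df (p c)) *ᵥ v) := by
    have h1 : ((Df (p c))ᵀ * Y) = (Y * Df (p c))ᵀ := by
      rw [Matrix.transpose_mul, hY.eq]
    rw [h1, Matrix.mulVec_transpose, Matrix.dotProduct_mulVec, dotProduct_comm]
  have hz : v ⬝ᵥ ((-((Df (p c))ᵀ * Y + Y * Df (p c))) *ᵥ v) = 0 := by
    rw [Matrix.neg_mulVec, dotProduct_neg, Matrix.add_mulVec, dotProduct_add, hsym, hc0]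
    ring
  simp only [star_trivial] at hpos
  rw [hz] at hpos
  exact lt_irrefl 0 hpos
end
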